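/- Let S, A, T, 𝒫 be as in the MDP context and let V : S × 𝒫 → ℝ be mixture-affine. Suppose V is dynamically consistent: for all s ∈ S, a ∈ A, and Π, Ω ∈ 𝒫, V(s, a·Π) > V(s, a·Ω) if and only if V̄(s,a,Π) > V̄(s,a,Ω). Then there exist a reward function R : S × A → ℝ and a discount function γ : S × A → ℝ with γ(s,a) > 0 for all (s,a), such that V(s, a·Π) = R(s,a) + γ(s,a)·V̄(s,a,Π) for all s ∈ S, a ∈ A, Π ∈ 𝒫. -/

import Mathlib

open scoped BigOperators

/-- The one-step expected value `V̄(s,a,π) = E_{s' ~ T(s,a)}[V(s',π)]`. -/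
noncomputable def Vbar {S A P : Type*} [Fintype S]
    (T : S → A → S → ℝ) (V : S → P → ℝ) (s : S) (a : A) (π : P) : ℝ :=
  ∑ s', T s a s' * V s' π

/-- `V` is mixture-affine with respect to the policy-mixing operation `mix`. -/
def MixAffine {S P : Type*} (mix : ℝ → P → P → P) (V : S → P → ℝ) : Prop :=
  ∀ (s : S) (β : ℝ), 0 ≤ β → β ≤ 1 → ∀ π ω : P,
    V s (mix β π ω) = β * V s π + (1 - β) * V s ω

/-- `V` satisfies the generalized Bellman form with reward `R` and discount `γ`. -/
def BellmanForm {S A P : Type*} [Fintype S] (T : S → A → S → ℝ) (act : A → P → P)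
    (V : S → P → ℝ) (R : S → A → ℝ) (γ : S → A → ℝ) : Prop :=
  ∀ (s : S) (a : A) (π : P), V s (act a π) = R s a + γ s a * Vbar T V s a π

/-- The conflict condition for `(V1, V2)` at `(s, a)`: there are policies `π, ω, l`
on which the one-step expected values of `V1` and `V2` are oppositely ordered, with
non-symmetric crossing points `β1 ≠ β2`. -/
def Conflict {S A P : Type*} [Fintype S]
    (T : S → A → S → ℝ) (V1 V2 : S → P → ℝ) (s : S) (a : A) : Prop :=
  ∃ π ω l : P,
    Vbar T V1 s a π > Vbar T V1 s a l ∧ Vbar T V1 s a l > Vbar T V1 s a ω ∧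
    Vbar T V2 s a ω > Vbar T V2 s a l ∧ Vbar T V2 s a l > Vbar T V2 s a π ∧
    (Vbar T V1 s a l - Vbar T V1 s a ω) / (Vbar T V1 s a π - Vbar T V1 s a ω) ≠
      (Vbar T V2 s a l - Vbar T V2 s a ω) / (Vbar T V2 s a π - Vbar T V2 s a ω)

private lemma affine_rep {P : Type*} (mix : ℝ → P → P → P) (f g : P → ℝ)
    (hf : ∀ β : ℝ, 0 ≤ β → β ≤ 1 → ∀ π ω : P,
      f (mix β π ω) = β * f π + (1 - β) * f ω)
    (hg : ∀ β : ℝ, 0 ≤ β → β ≤ 1 → ∀ π ω : P,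
      g (mix β π ω) = β * g π + (1 - β) * g ω)
    (hiff : ∀ π ω : P, f π > f ω ↔ g π > g ω) :
    ∃ r c : ℝ, 0 < c ∧ ∀ π : P, f π = r + c * g π := by
  have heq : ∀ π ω : P, g π = g ω → f π = f ω := by
    intro π ω h
    by_contra hne
    rcases lt_or_gt_of_ne hne with h1 | h1
    · exact absurd ((hiff ω π).1 h1) (by simp [h])
    · exact absurd ((hiff π ω).1 h1) (by simp [h])
  have cross : ∀ π ω l : P, g π > g l → g l > g ω →
      (f l - f ω) * (g π - g ω) = (g l - g ω) * (f π - f ω) := by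
    intro π ω l hπl hlω
    have hfπl : f π > f l := (hiff π l).2 hπl
    have hflω : f l > f ω := (hiff l ω).2 hlω
    have hD : (0:ℝ) < f π - f ω := by linarith
    have hE : (0:ℝ) < g π - g ω := by linarith
    set α := (f l - f ω) / (f π - f ω) with hα
    set β := (g l - g ω) / (g π - g ω) with hβ
    have hα0 : 0 < α := div_pos (by linarith) hD
    have hα1 : α < 1 := (div_lt_one hD).2 (by linarith)
    have hβ0 : 0 < β := div_pos (by linarith) hE
    have hβ1 : β < 1 := (div_lt_one hE).2 (by linarith)
    have hαD : f l - f ω = α * (f π - f ω) := by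
      rw [hα, div_mul_cancel₀ _ (ne_of_gt hD)]
    have hβE : g l - g ω = β * (g π - g ω) := by
      rw [hβ, div_mul_cancel₀ _ (ne_of_gt hE)]
    have hαβ : α = β := by
      by_contra hne
      rcases lt_or_gt_of_ne hne with hlt | hgt
      · set t := (α + β) / 2 with ht
        have ht0 : 0 ≤ t := by simp only [ht]; linarith
        have ht1 : t ≤ 1 := by simp only [ht]; linarith
        have hmf : f (mix t π ω) = t * f π + (1 - t) * f ω := hf t ht0 ht1 π ω
        have hmg : g (mix t π ω) = t * g π + (1 - t) * g ω := hg t ht0 ht1 π ω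
        have h1 : g (mix t π ω) < g l := by
          rw [hmg]
          nlinarith [mul_lt_mul_of_pos_right (show t < β by simp only [ht]; linarith) hE]
        have h2 : f l > f (mix t π ω) := (hiff l _).2 h1
        nlinarith [mul_lt_mul_of_pos_right (show α < t by simp only [ht]; linarith) hD]
      · set t := (α + β) / 2 with ht
        have ht0 : 0 ≤ t := by simp only [ht]; linarith
        have ht1 : t ≤ 1 := by simp only [ht]; linarith
        have hmf : f (mix t π ω) = t * f π + (1 - t) * f ω := hf t ht0 ht1 π ω
        have hmg : g (mix t π ω) = t * g π + (1 - t) * g ω := hg t ht0 ht1 π ω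
        have h1 : g (mix t π ω) > g l := by
          rw [hmg]
          nlinarith [mul_lt_mul_of_pos_right (show β < t by simp only [ht]; linarith) hE]
        have h2 : f (mix t π ω) > f l := (hiff _ l).2 h1
        nlinarith [mul_lt_mul_of_pos_right (show t < α by simp only [ht]; linarith) hD]
    rw [hαD, hβE, hαβ]
    ring
  by_cases hex : ∃ π ω : P, g π > g ω
  · obtain ⟨π0, ω0, h0⟩ := hex
    have hf0 : f π0 > f ω0 := (hiff π0 ω0).2 h0
    have hE : (0:ℝ) < g π0 - g ω0 := by linarith
    have hEne : g π0 - g ω0 ≠ 0 := ne_of_gt hE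
    refine ⟨f ω0 - (f π0 - f ω0) / (g π0 - g ω0) * g ω0,
      (f π0 - f ω0) / (g π0 - g ω0), div_pos (by linarith) hE, ?_⟩
    intro l
    have key : (f l - f ω0) * (g π0 - g ω0) = (g l - g ω0) * (f π0 - f ω0) := by
      rcases lt_trichotomy (g l) (g ω0) with h | h | h
      · have hc := cross π0 l ω0 (by linarith) h
        linear_combination (-1 : ℝ) * hc
      · have hfl : f l = f ω0 := heq l ω0 h
        rw [hfl, h]; ring
      · rcases lt_trichotomy (g l) (g π0) with h2 | h2 | h2
        · exact cross π0 ω0 l h2 h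
        · have hfl : f l = f π0 := heq l π0 h2
          rw [hfl, h2]; ring
        · have hc := cross l ω0 π0 h2 h0
          linear_combination -hc
    field_simp
    linear_combination key
  · push_neg at hex
    by_cases hP : Nonempty P
    · obtain ⟨π0⟩ := hP
      refine ⟨f π0 - g π0, 1, one_pos, fun l => ?_⟩
      have hg' : g l = g π0 := le_antisymm (hex l π0) (hex π0 l)
      rw [heq l π0 hg', hg']; ring
    · exact ⟨0, 1, one_pos, fun l => absurd ⟨l⟩ hP⟩

/-- **Generalized Bellman representation.** A mixture-affine, dynamically consistent
value function on prospects admits a reward function and a strictly positive discount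
function satisfying the generalized Bellman equation. -/
theorem bellman_representation
    {S A P : Type*} [Fintype S] [Nonempty S] [Fintype A] [Nonempty A]
    (T : S → A → S → ℝ)
    (hT0 : ∀ s a s', 0 ≤ T s a s') (hT1 : ∀ s a, ∑ s', T s a s' = 1)
    (act : A → P → P) (mix : ℝ → P → P → P)
    (hact_mix : ∀ (a : A) (β : ℝ) (π ω : P), act a (mix β π ω) = mix β (act a π) (act a ω))
    (V : S → P → ℝ) (haff : MixAffine mix V)
    (hdc : ∀ (s : S) (a : A) (π ω : P),
        V s (act a π) > V s (act a ω) ↔ Vbar T V s a π > Vbar T V s a ω) :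
    ∃ (R : S → A → ℝ) (γ : S → A → ℝ), (∀ s a, 0 < γ s a) ∧
      BellmanForm T act V R γ := by
  have aux : ∀ s a, ∃ r c : ℝ, 0 < c ∧
      ∀ π : P, V s (act a π) = r + c * Vbar T V s a π := by
    intro s a
    apply affine_rep mix (fun π => V s (act a π)) (fun π => Vbar T V s a π)
    · intro β hb0 hb1 π ω
      show V s (act a (mix β π ω)) = _
      rw [hact_mix, haff s β hb0 hb1]
    · intro β hb0 hb1 π ω
      simp only [Vbar]
      rw [Finset.mul_sum, Finset.mul_sum, ← Finset.sum_add_distrib]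
      refine Finset.sum_congr rfl fun s' _ => ?_
      rw [haff s' β hb0 hb1]; ring
    · intro π ω
      exact hdc s a π ω
  choose R γ h1 h2 using aux
  exact ⟨R, γ, h1, fun s a π => h2 s a π⟩
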